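/- Monotone random walk domination for λ updates: let (λ_t) evolve by λ_{t+1} = λ_t/F on success (probability at most q per step while in a state set X) and λ_{t+1} = λ_t · F^{1/s} otherwise, with F > 1 and s > 0. Starting from λ_0 ∈ [α F^{β-1}, α F^β) with α ≥ 1 and β ∈ ℕ, the probability that λ falls below α before exceeding α F^β or leaving X is at most the ruin probability of a biased random walk on {0,...,β+1} started at β with down-probability q, namely (1/q - 2)/((1/q - 1)^{β+1} - 1) when q < 1/2. -/

import Mathlib

open MeasureTheory
open scoped Classical

namespace Stmt15Aux

variable {Ω : Type*}

noncomputable def walk (β : ℤ) (C S : ℕ → Set Ω) : ℕ → Ω → ℤ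
  | 0 => fun _ => β
  | (t+1) => fun ω =>
      if 0 < walk β C S t ω ∧ walk β C S t ω < β + 1 ∧ ω ∈ C t then
        (if ω ∈ S t then walk β C S t ω - 1 else walk β C S t ω + 1)
      else walk β C S t ω

lemma walk_mem (β : ℤ) (C S : ℕ → Set Ω) (t : ℕ) (ω : Ω) :
    0 ≤ walk β C S t ω ∧ walk β C S t ω ≤ β + 1 ∨ walk β C S t ω = β := by
  induction t with
  | zero => exact Or.inr rfl
  | succ t ih =>
    simp only [walk]
    split_ifs with h1 h2 <;> omega

lemma walk_zero_succ (β : ℤ) (C S : ℕ → Set Ω) (t : ℕ) (ω : Ω)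
    (h : walk β C S t ω = 0) : walk β C S (t+1) ω = 0 := by
  simp [walk, h]

lemma walk_zero_mono (β : ℤ) (C S : ℕ → Set Ω) {t u : ℕ} (htu : t ≤ u) (ω : Ω)
    (h : walk β C S t ω = 0) : walk β C S u ω = 0 := by
  induction u with
  | zero =>
    have : t = 0 := by omega
    simpa [this] using h
  | succ u ih =>
    rcases Nat.lt_or_ge t (u+1) with h'|h'
    · exact walk_zero_succ _ _ _ _ _ (ih (by omega))
    · have : t = u + 1 := by omega
      simpa [this] using h

lemma walk_measurable {m0 : MeasurableSpace Ω} (ℱ : Filtration ℕ m0)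
    (β : ℤ) (C S : ℕ → Set Ω) (hC : ∀ t, MeasurableSet[ℱ t] (C t))
    (hS : ∀ t, MeasurableSet[ℱ (t+1)] (S t)) (t : ℕ) :
    Measurable[ℱ t] (walk β C S t) := by
  induction t with
  | zero => exact measurable_const
  | succ t ih =>
    have ih' : Measurable[ℱ (t+1)] (walk β C S t) :=
      ih.mono (ℱ.mono (Nat.le_succ t)) le_rfl
    have hcond : MeasurableSet[ℱ (t+1)]
        {ω | 0 < walk β C S t ω ∧ walk β C S t ω < β + 1 ∧ ω ∈ C t} := by
      refine MeasurableSet.inter ?_ (MeasurableSet.inter ?_ ?_)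
      · exact ih' (measurableSet_Ioi)
      · exact ih' (measurableSet_Iio)
      · exact (ℱ.mono (Nat.le_succ t)) _ (hC t)
    show Measurable[ℱ (t+1)] fun ω =>
      if 0 < walk β C S t ω ∧ walk β C S t ω < β + 1 ∧ ω ∈ C t then
        (if ω ∈ S t then walk β C S t ω - 1 else walk β C S t ω + 1)
      else walk β C S t ω
    exact Measurable.ite hcond
      (Measurable.ite (hS t) (ih'.sub measurable_const) (ih'.add measurable_const)) ih'

lemma coupling (F s α : ℝ) (β : ℕ) (hF : 1 < F) (hs0 : 0 < s) (hs1 : s ≤ 1)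
    (hα : 1 ≤ α) (hβ : 1 ≤ β)
    (lam : ℕ → Ω → ℝ) (S C : ℕ → Set Ω)
    (hinit : ∀ ω, α * F ^ ((β : ℝ) - 1) ≤ lam 0 ω ∧ lam 0 ω < α * F ^ (β : ℝ))
    (hsucc : ∀ t ω, ω ∈ S t → lam (t + 1) ω = lam t ω / F)
    (hfail : ∀ t ω, ω ∉ S t → lam (t + 1) ω = lam t ω * F ^ (1/s))
    (ω : Ω) (T : ℕ) (hT0 : lam T ω < α)
    (hpre : ∀ t < T, lam t ω < α * F ^ (β : ℝ) ∧ ω ∈ C t) :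
    ∃ t, walk (β : ℤ) C S t ω = 0 := by
  have hF0 : (0:ℝ) < F := lt_trans one_pos hF
  set w : ℕ → ℤ := fun t => walk (β : ℤ) C S t ω with hw
  -- tracking lemma
  have track : ∀ t, t ≤ T → (∀ u, u < t → 0 < w u ∧ w u < (β:ℤ) + 1) →
      α * F ^ ((w t : ℝ) - 1) ≤ lam t ω := by
    intro t
    induction t with
    | zero =>
      intro _ _
      have : w 0 = (β : ℤ) := rfl
      rw [this]
      simpa using (hinit ω).1
    | succ t ih =>
      intro hle hint
      have ht : t < T := lt_of_lt_of_le (Nat.lt_succ_self t) hle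
      have hintt := hint t (Nat.lt_succ_self t)
      have hCt : ω ∈ C t := (hpre t ht).2
      have hprev : α * F ^ ((w t : ℝ) - 1) ≤ lam t ω :=
        ih (le_of_lt ht) (fun u hu => hint u (Nat.lt_succ_of_lt hu))
      have hstep : w (t+1) = if ω ∈ S t then w t - 1 else w t + 1 := by
        show walk (β:ℤ) C S (t+1) ω = _
        simp only [walk]
        rw [if_pos ⟨hintt.1, hintt.2, hCt⟩]
      by_cases hS : ω ∈ S t
      · rw [hstep, if_pos hS, hsucc t ω hS]
        have : ((w t - 1 : ℤ) : ℝ) - 1 = ((w t : ℝ) - 1) - 1 := by push_cast; ring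
        rw [this, Real.rpow_sub hF0 _ 1, Real.rpow_one, ← mul_div_assoc]
        gcongr
      · rw [hstep, if_neg hS, hfail t ω hS]
        have h1s : (1:ℝ) ≤ 1/s := by
          rw [le_div_iff₀ hs0]; linarith
        have : ((w t + 1 : ℤ) : ℝ) - 1 = (w t : ℝ) := by push_cast; ring
        rw [this]
        have : α * F ^ (w t : ℝ) ≤ (α * F ^ ((w t : ℝ) - 1)) * F ^ (1/s) := by
          rw [mul_assoc, ← Real.rpow_add hF0]
          have : (w t : ℝ) ≤ (w t : ℝ) - 1 + 1/s := by linarith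
          have := Real.rpow_le_rpow_left_iff (x := F) hF |>.mpr this
          nlinarith [Real.rpow_pos_of_pos hF0 ((w t : ℝ)), le_trans zero_le_one hα]
        refine this.trans ?_
        have hpow : (0:ℝ) < F ^ (1/s) := Real.rpow_pos_of_pos hF0 _
        exact mul_le_mul_of_nonneg_right hprev (le_of_lt hpow)
  have hα0 : (0:ℝ) < α := lt_of_lt_of_le one_pos hα
  -- there is a first exit time
  have hex : ∃ t, t ≤ T ∧ ¬(0 < w t ∧ w t < (β:ℤ) + 1) := by
    by_contra hno
    push_neg at hno
    have hint : ∀ u, u ≤ T → 0 < w u ∧ w u < (β:ℤ)+1 := fun u hu => hno u hu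
    have := track T le_rfl (fun u hu => hint u (le_of_lt hu))
    have hlt : α * F ^ ((w T : ℝ) - 1) < α * 1 := by
      calc α * F ^ ((w T : ℝ) - 1) ≤ lam T ω := this
      _ < α := hT0
      _ = α * 1 := (mul_one α).symm
    have hlt1 : F ^ ((w T : ℝ) - 1) < 1 := (mul_lt_mul_iff_right₀ hα0).mp hlt
    have hneg : ((w T : ℝ) - 1) < 0 := by
      by_contra hc
      push_neg at hc
      have := Real.one_le_rpow (le_of_lt hF) hc
      linarith
    have hwT : ((w T : ℤ) : ℝ) < 1 := by linarith
    have : w T < 1 := by exact_mod_cast hwT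
    exact absurd (hint T le_rfl).1 (by omega)
  classical
  set t1 := Nat.find hex with ht1
  obtain ⟨ht1T, ht1ex⟩ := Nat.find_spec hex
  rw [← ht1] at ht1T ht1ex
  have hmin : ∀ u, u < t1 → 0 < w u ∧ w u < (β:ℤ) + 1 := by
    intro u hu
    by_contra hc
    exact Nat.find_min hex hu ⟨le_trans (le_of_lt hu) ht1T, hc⟩
  have htrack := track t1 ht1T hmin
  have hmem : 0 ≤ w t1 ∧ w t1 ≤ (β:ℤ) + 1 := by
    rcases walk_mem (β:ℤ) C S t1 ω with h | h
    · exact h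
    · have h' : w t1 = (β:ℤ) := h
      omega
  have : w t1 = 0 ∨ w t1 = (β:ℤ) + 1 := by omega
  rcases this with h0 | hb
  · exact ⟨t1, h0⟩
  · exfalso
    rw [hb] at htrack
    have : ((((β:ℤ) + 1 : ℤ)) : ℝ) - 1 = (β : ℝ) := by push_cast; ring
    rw [this] at htrack
    rcases Nat.lt_or_ge t1 T with hlt | hge
    · exact absurd htrack (not_le.mpr (hpre t1 hlt).1)
    · have : t1 = T := le_antisymm ht1T hge
      rw [this] at htrack
      have h1 : (1:ℝ) ≤ F ^ (β:ℝ) := Real.one_le_rpow (le_of_lt hF) (Nat.cast_nonneg β)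
      nlinarith

section Phi

noncomputable def phi (r : ℝ) (β : ℤ) (k : ℤ) : ℝ :=
  (r ^ (β + 1 - k) - 1) / (r ^ (β + 1) - 1)

variable {r : ℝ} {β : ℤ}

lemma phi_den_pos (hr : 1 < r) (hβ : 1 ≤ β) : 0 < r ^ (β + 1) - 1 := by
  have h : r ^ (0:ℤ) < r ^ (β+1) :=
    (zpow_lt_zpow_iff_right₀ hr).mpr (by omega)
  rw [zpow_zero] at h
  linarith

lemma phi_anti (hr : 1 < r) (hβ : 1 ≤ β) {k l : ℤ} (hkl : k ≤ l) :
    phi r β l ≤ phi r β k := by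
  have hd := phi_den_pos hr hβ
  unfold phi
  rw [div_le_div_iff_of_pos_right hd]
  have := zpow_le_zpow_right₀ (le_of_lt hr) (show β + 1 - l ≤ β + 1 - k by omega)
  linarith

lemma phi_nonneg (hr : 1 < r) (hβ : 1 ≤ β) {k : ℤ} (hk : k ≤ β + 1) :
    0 ≤ phi r β k := by
  have hd := phi_den_pos hr hβ
  have h1 : (1:ℝ) ≤ r ^ (β + 1 - k) := one_le_zpow₀ (le_of_lt hr) (by omega)
  exact div_nonneg (by linarith) (le_of_lt hd)

lemma phi_zero (hr : 1 < r) (hβ : 1 ≤ β) : phi r β 0 = 1 := by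
  have hd := phi_den_pos hr hβ
  unfold phi
  rw [sub_zero, div_self (by linarith)]

lemma phi_le_one (hr : 1 < r) (hβ : 1 ≤ β) {k : ℤ} (hk : 0 ≤ k) :
    phi r β k ≤ 1 := by
  rw [← phi_zero hr hβ]
  exact phi_anti hr hβ hk

lemma phi_harmonic {q : ℝ} (hq0 : 0 < q) (hq : q < 1/2) (hr : r = (1-q)/q)
    (k : ℤ) : q * phi r β (k - 1) + (1 - q) * phi r β (k + 1) = phi r β k := by
  have hq0' : q ≠ 0 := ne_of_gt hq0
  have h1q : (0:ℝ) < 1 - q := by linarith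
  have hr0 : r ≠ 0 := by rw [hr]; positivity
  have key2 : q * (r * r) + (1 - q) = r := by
    rw [hr]; field_simp; ring
  have e1 : β + 1 - (k - 1) = (β - k) + 1 + 1 := by ring
  have e2 : β + 1 - (k + 1) = β - k := by ring
  have e3 : β + 1 - k = (β - k) + 1 := by ring
  unfold phi
  rw [e1, e2, e3, zpow_add_one₀ hr0, zpow_add_one₀ hr0]
  have hnum : q * (r ^ (β-k) * r * r - 1) + (1-q) * (r ^ (β-k) - 1)
      = r ^ (β-k) * r - 1 := by linear_combination (r ^ (β-k)) * key2
  have hsplit : q * ((r ^ (β-k) * r * r - 1) / (r ^ (β+1) - 1))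
      + (1-q) * ((r ^ (β-k) - 1) / (r ^ (β+1) - 1))
      = (q * (r ^ (β-k) * r * r - 1) + (1-q) * (r ^ (β-k) - 1)) / (r ^ (β+1) - 1) := by
    ring
  rw [hsplit, hnum]

end Phi

lemma key_prob {m0 : MeasurableSpace Ω} (μ : Measure Ω) [IsProbabilityMeasure μ]
    (ℱ : Filtration ℕ m0) (q : ℝ) (n : ℕ) (S : Set Ω)
    (hS : MeasurableSet S) (A : Set Ω) (hA : MeasurableSet[ℱ n] A)
    (hAq : ∀ ω ∈ A, (μ[S.indicator (fun _ => (1:ℝ)) | ℱ n]) ω ≤ q) :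
    (μ (A ∩ S)).toReal ≤ q * (μ A).toReal := by
  have hint : Integrable (S.indicator fun _ => (1:ℝ)) μ :=
    (integrable_const 1).indicator hS
  have hAm : MeasurableSet A := ℱ.le n _ hA
  have h1 : ∫ ω in A, S.indicator (fun _ => (1:ℝ)) ω ∂μ = (μ (A ∩ S)).toReal := by
    rw [setIntegral_indicator hS, setIntegral_const, smul_eq_mul, mul_one, measureReal_def]
  have h2 : ∫ ω in A, (μ[S.indicator (fun _ => (1:ℝ)) | ℱ n]) ω ∂μ
      = ∫ ω in A, S.indicator (fun _ => (1:ℝ)) ω ∂μ :=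
    setIntegral_condExp (ℱ.le n) hint hA
  have h3 : ∫ ω in A, (μ[S.indicator (fun _ => (1:ℝ)) | ℱ n]) ω ∂μ
      ≤ ∫ _ in A, q ∂μ :=
    setIntegral_mono_on integrable_condExp.integrableOn
      (integrableOn_const (measure_ne_top μ A)) hAm hAq
  rw [setIntegral_const, smul_eq_mul, measureReal_def] at h3
  rw [← h1, ← h2]
  linarith [h3, mul_comm ((μ A).toReal) q]

lemma integral_step {m0 : MeasurableSpace Ω} (μ : Measure Ω) [IsProbabilityMeasure μ]
    (ℱ : Filtration ℕ m0) (q r : ℝ) (hq0 : 0 < q) (hq : q < 1/2)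
    (hr : r = (1-q)/q) (β : ℤ) (hβ : 1 ≤ β)
    (S C : ℕ → Set Ω)
    (hS : ∀ t, MeasurableSet[ℱ (t+1)] (S t)) (hC : ∀ t, MeasurableSet[ℱ t] (C t))
    (hCq : ∀ t, ∀ ω ∈ C t, (μ[(S t).indicator (fun _ => (1:ℝ)) | ℱ t]) ω ≤ q)
    (hmeas : ∀ t, Measurable (walk β C S t))
    (hintg : ∀ t, Integrable (fun ω => phi r β (walk β C S t ω)) μ)
    (hr1 : 1 < r)
    (hanti : ∀ {k l : ℤ}, k ≤ l → phi r β l ≤ phi r β k)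
    (hharm : ∀ k : ℤ, q * phi r β (k - 1) + (1 - q) * phi r β (k + 1) = phi r β k)
    (n : ℕ) :
    ∫ ω, phi r β (walk β C S (n+1) ω) ∂μ ≤ ∫ ω, phi r β (walk β C S n ω) ∂μ := by
  set w := walk β C S with hwdef
  set f : ℕ → Ω → ℝ := fun t ω => phi r β (w t ω) with hfdef
  -- the sets of the partition
  set A : ℤ → Set Ω := fun k => {ω | w n ω = k} ∩ C n with hAdef
  have hAmeas : ∀ k, MeasurableSet[ℱ n] (A k) :=
    fun k => ((walk_measurable ℱ β C S hC hS n) (measurableSet_singleton k)).inter (hC n)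
  have hSm : MeasurableSet (S n) := ℱ.le (n+1) _ (hS n)
  -- pointwise identity
  have hpt : ∀ ω, f (n+1) ω - f n ω
      = ∑ k ∈ Finset.Icc (1:ℤ) β,
        (((A k) ∩ S n).indicator (fun _ => phi r β (k-1) - phi r β k) ω
          + ((A k) \ S n).indicator (fun _ => phi r β (k+1) - phi r β k) ω) := by
    intro ω
    by_cases hcnd : 0 < w n ω ∧ w n ω < β + 1 ∧ ω ∈ C n
    · set k0 := w n ω with hk0
      have hk0mem : k0 ∈ Finset.Icc (1:ℤ) β := by
        rw [Finset.mem_Icc]; omega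
      have hstep : w (n+1) ω = if ω ∈ S n then k0 - 1 else k0 + 1 := by
        show walk β C S (n+1) ω = _
        simp only [walk]
        rw [if_pos hcnd]
      rw [Finset.sum_eq_single_of_mem k0 hk0mem]
      · by_cases hSω : ω ∈ S n
        · have e1 : ((A k0) ∩ S n).indicator (fun _ => phi r β (k0-1) - phi r β k0) ω
              = phi r β (k0-1) - phi r β k0 :=
            Set.indicator_of_mem (show ω ∈ (A k0) ∩ S n from ⟨⟨rfl, hcnd.2.2⟩, hSω⟩) _
          have e2 : ((A k0) \ S n).indicator (fun _ => phi r β (k0+1) - phi r β k0) ω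
              = 0 := Set.indicator_of_notMem (fun h => h.2 hSω) _
          rw [e1, e2, add_zero, hfdef]
          simp only
          rw [hstep, if_pos hSω]
        · have e1 : ((A k0) ∩ S n).indicator (fun _ => phi r β (k0-1) - phi r β k0) ω
              = 0 := Set.indicator_of_notMem (fun h => hSω h.2) _
          have e2 : ((A k0) \ S n).indicator (fun _ => phi r β (k0+1) - phi r β k0) ω
              = phi r β (k0+1) - phi r β k0 :=
            Set.indicator_of_mem (show ω ∈ (A k0) \ S n from ⟨⟨rfl, hcnd.2.2⟩, hSω⟩) _
          rw [e1, e2, zero_add, hfdef]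
          simp only
          rw [hstep, if_neg hSω]
      · intro k _ hk
        have hnot : ω ∉ A k := fun h => hk (h.1.symm ▸ rfl)
        rw [Set.indicator_of_notMem (fun h => hnot h.1) _,
          Set.indicator_of_notMem (fun h => hnot h.1) _, add_zero]
    · have hfr : w (n+1) ω = w n ω := by
        show walk β C S (n+1) ω = _
        simp only [walk]
        rw [if_neg hcnd]
      have hz : ∀ k ∈ Finset.Icc (1:ℤ) β,
          (((A k) ∩ S n).indicator (fun _ => phi r β (k-1) - phi r β k) ω
            + ((A k) \ S n).indicator (fun _ => phi r β (k+1) - phi r β k) ω) = 0 := by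
        intro k hk
        rw [Finset.mem_Icc] at hk
        have hnot : ω ∉ A k := by
          intro h
          exact hcnd ⟨by rw [h.1]; omega, by rw [h.1]; omega, h.2⟩
        rw [Set.indicator_of_notMem (fun h => hnot h.1) _,
          Set.indicator_of_notMem (fun h => hnot h.1) _, add_zero]
      rw [Finset.sum_congr rfl hz, Finset.sum_const, smul_zero, hfdef]
      simp only
      rw [hfr, sub_self]
  -- integrate
  have hterm_intg : ∀ k ∈ Finset.Icc (1:ℤ) β,
      Integrable (fun ω => ((A k) ∩ S n).indicator (fun _ => phi r β (k-1) - phi r β k) ω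
        + ((A k) \ S n).indicator (fun _ => phi r β (k+1) - phi r β k) ω) μ := by
    intro k _
    exact ((integrable_const _).indicator ((ℱ.le n _ (hAmeas k)).inter hSm)).add
      ((integrable_const _).indicator ((ℱ.le n _ (hAmeas k)).diff hSm))
  have hint : ∫ ω, (f (n+1) ω - f n ω) ∂μ
      = ∑ k ∈ Finset.Icc (1:ℤ) β,
        ((phi r β (k-1) - phi r β k) * (μ ((A k) ∩ S n)).toReal
          + (phi r β (k+1) - phi r β k) * (μ ((A k) \ S n)).toReal) := by
    rw [integral_congr_ae (ae_of_all μ hpt), integral_finset_sum _ hterm_intg]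
    refine Finset.sum_congr rfl fun k _ => ?_
    rw [integral_add ((integrable_const _).indicator ((ℱ.le n _ (hAmeas k)).inter hSm))
      ((integrable_const _).indicator ((ℱ.le n _ (hAmeas k)).diff hSm)),
      integral_indicator_const _ ((ℱ.le n _ (hAmeas k)).inter hSm),
      integral_indicator_const _ ((ℱ.le n _ (hAmeas k)).diff hSm),
      smul_eq_mul, smul_eq_mul, measureReal_def, measureReal_def]
    ring
  -- each term is ≤ 0
  have hterm : ∀ k ∈ Finset.Icc (1:ℤ) β,
      (phi r β (k-1) - phi r β k) * (μ ((A k) ∩ S n)).toReal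
        + (phi r β (k+1) - phi r β k) * (μ ((A k) \ S n)).toReal ≤ 0 := by
    intro k _
    set a := (μ ((A k) ∩ S n)).toReal with ha
    set b := (μ ((A k) \ S n)).toReal with hb
    have hsum : a + b = (μ (A k)).toReal := by
      rw [ha, hb, ← ENNReal.toReal_add (measure_ne_top μ _) (measure_ne_top μ _),
        measure_inter_add_diff _ hSm]
    have haq : a ≤ q * (μ (A k)).toReal :=
      key_prob μ ℱ q n (S n) hSm (A k) (hAmeas k) (fun ω hω => hCq n ω hω.2)
    have ha0 : 0 ≤ a := ENNReal.toReal_nonneg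
    have hb0 : 0 ≤ b := ENNReal.toReal_nonneg
    have hmono : phi r β (k+1) ≤ phi r β (k-1) := hanti (by omega)
    have haq' : a ≤ q * (a + b) := by rw [hsum]; exact haq
    have h1 : (1 - q) * a - q * b ≤ 0 := by nlinarith [haq']
    rw [← hharm k]
    nlinarith [mul_nonpos_of_nonneg_of_nonpos (sub_nonneg.mpr hmono) h1]
  have : ∫ ω, (f (n+1) ω - f n ω) ∂μ ≤ 0 := by
    rw [hint]
    exact Finset.sum_nonpos hterm
  rw [integral_sub (hintg (n+1)) (hintg n)] at this
  linarith

end Stmt15Aux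
/-- Monotone random walk domination for the self-adjusting offspring population
size: starting from `λ_0 ∈ [αF^(β-1), αF^β)`, with success (probability at most `q`
while in `X`) dividing `λ` by `F` and failure multiplying it by `F^(1/s)`, the
probability that `λ` falls below `α` before exceeding `α F^β` or leaving `X` is at
most the ruin probability `(1/q - 2)/((1/q - 1)^(β+1) - 1)` of the biased walk. -/
theorem stmt_15 {Ω : Type*} {m0 : MeasurableSpace Ω} (μ : Measure Ω)
    [IsProbabilityMeasure μ] (ℱ : Filtration ℕ m0)
    (F s α q : ℝ) (β : ℕ) (hF : 1 < F) (hs0 : 0 < s) (hs1 : s ≤ 1)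
    (hα : 1 ≤ α) (hβ : 1 ≤ β) (hq0 : 0 < q) (hq : q < 1/2)
    (lam : ℕ → Ω → ℝ) (S X : ℕ → Set Ω)
    (hSmeas : ∀ t, MeasurableSet[ℱ (t + 1)] (S t))
    (hinit : ∀ ω, α * F ^ ((β : ℝ) - 1) ≤ lam 0 ω ∧ lam 0 ω < α * F ^ (β : ℝ))
    (hsucc : ∀ t ω, ω ∈ S t → lam (t + 1) ω = lam t ω / F)
    (hfail : ∀ t ω, ω ∉ S t → lam (t + 1) ω = lam t ω * F ^ (1/s))
    (hcond : ∀ t, ∀ᵐ ω ∂μ, ω ∈ X t →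
      (μ[(S t).indicator (fun _ => (1:ℝ)) | ℱ t]) ω ≤ q) :
    μ {ω | ∃ T : ℕ, lam T ω < α ∧
        ∀ t < T, lam t ω < α * F ^ (β : ℝ) ∧ ω ∈ X t} ≤
      ENNReal.ofReal ((1/q - 2) / ((1/q - 1) ^ (β + 1) - 1)) := by
  classical
  open Stmt15Aux in
  set r : ℝ := (1 - q) / q with hrdef
  have hr1 : 1 < r := (one_lt_div hq0).mpr (by linarith)
  set βZ : ℤ := (β : ℤ) with hβZdef
  have hβZ : 1 ≤ βZ := by rw [hβZdef]; exact_mod_cast hβ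
  -- the measurable hull of X t
  set C : ℕ → Set Ω := fun t => {ω | (μ[(S t).indicator (fun _ => (1:ℝ)) | ℱ t]) ω ≤ q}
    with hCdef
  have hC : ∀ t, MeasurableSet[ℱ t] (C t) := fun t =>
    measurableSet_le stronglyMeasurable_condExp.measurable measurable_const
  have hCq : ∀ t, ∀ ω ∈ C t, (μ[(S t).indicator (fun _ => (1:ℝ)) | ℱ t]) ω ≤ q :=
    fun t ω h => h
  -- the coupled walk and its value function
  have hW : ∀ t, Measurable (walk βZ C S t) := fun t =>
    (walk_measurable ℱ βZ C S hC hSmeas t).mono (ℱ.le t) le_rfl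
  have hwb : ∀ t ω, 0 ≤ walk βZ C S t ω ∧ walk βZ C S t ω ≤ βZ + 1 := by
    intro t ω
    rcases walk_mem βZ C S t ω with h | h
    · exact h
    · omega
  set f : ℕ → Ω → ℝ := fun t ω => phi r βZ (walk βZ C S t ω) with hfdef
  have hf0 : ∀ t ω, 0 ≤ f t ω := fun t ω =>
    phi_nonneg hr1 hβZ (hwb t ω).2
  have hf1 : ∀ t ω, f t ω ≤ 1 := fun t ω =>
    phi_le_one hr1 hβZ (hwb t ω).1
  have hfm : ∀ t, Measurable (f t) := fun t =>
    (measurable_from_top (f := phi r βZ)).comp (hW t)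
  have hfint : ∀ t, Integrable (f t) μ := by
    intro t
    refine (integrable_const (1:ℝ)).mono' (hfm t).aestronglyMeasurable ?_
    refine ae_of_all _ fun ω => ?_
    rw [Real.norm_eq_abs, abs_le]
    exact ⟨by linarith [hf0 t ω], hf1 t ω⟩
  have hdec : ∀ n, ∫ ω, f (n+1) ω ∂μ ≤ ∫ ω, f n ω ∂μ :=
    integral_step μ ℱ q r hq0 hq hrdef βZ hβZ S C hSmeas hC hCq hW hfint hr1
      (fun {k l} hkl => phi_anti hr1 hβZ hkl) (phi_harmonic hq0 hq hrdef)
  have hmono : ∀ n, ∫ ω, f n ω ∂μ ≤ ∫ ω, f 0 ω ∂μ := by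
    intro n
    induction n with
    | zero => exact le_rfl
    | succ n ih => exact (hdec n).trans ih
  have hf0int : ∫ ω, f 0 ω ∂μ = phi r βZ βZ := by
    have : f 0 = fun _ => phi r βZ βZ := rfl
    rw [this, integral_const, measureReal_def, measure_univ, ENNReal.toReal_one, one_smul]
  -- the ruin events
  set ruin : ℕ → Set Ω := fun n => {ω | walk βZ C S n ω = 0} with hruindef
  have hruinm : ∀ n, MeasurableSet (ruin n) := fun n => hW n (measurableSet_singleton 0)
  have hruinmono : Monotone ruin := by
    intro n m hnm ω hω
    exact walk_zero_mono βZ C S hnm ω hω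
  have hμruin : ∀ n, (μ (ruin n)).toReal ≤ phi r βZ βZ := by
    intro n
    have h1 : (μ (ruin n)).toReal
        = ∫ ω, (ruin n).indicator (fun _ => (1:ℝ)) ω ∂μ := by
      rw [integral_indicator_const _ (hruinm n), smul_eq_mul, mul_one, measureReal_def]
    have h2 : ∫ ω, (ruin n).indicator (fun _ => (1:ℝ)) ω ∂μ ≤ ∫ ω, f n ω ∂μ := by
      refine integral_mono ((integrable_const 1).indicator (hruinm n)) (hfint n) ?_
      intro ω
      by_cases hω : ω ∈ ruin n
      · rw [Set.indicator_of_mem hω]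
        have : walk βZ C S n ω = 0 := hω
        show (1:ℝ) ≤ f n ω
        rw [hfdef]
        simp only
        rw [this, phi_zero hr1 hβZ]
      · rw [Set.indicator_of_notMem hω]
        exact hf0 n ω
    rw [h1]
    exact h2.trans ((hmono n).trans_eq hf0int)
  -- identify phi r βZ βZ with the stated bound
  have hphiβ : phi r βZ βZ = (1/q - 2) / ((1/q - 1) ^ (β + 1) - 1) := by
    have hr' : r = 1/q - 1 := by
      rw [hrdef, sub_div, div_self (ne_of_gt hq0), one_div]
    have e1 : βZ + 1 - βZ = 1 := by ring
    have e2 : r ^ (βZ + 1) = r ^ (β + 1 : ℕ) := by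
      rw [← zpow_natCast]
      congr 1
    unfold phi
    rw [e1, zpow_one, e2, hr']
    congr 1
    ring
  -- the almost sure inclusion
  set G : Set Ω := {ω | ∀ t, ω ∈ X t → ω ∈ C t} with hGdef
  have hGc : μ Gᶜ = 0 := by
    have : ∀ᵐ ω ∂μ, ∀ t, ω ∈ X t → ω ∈ C t := ae_all_iff.mpr hcond
    exact this
  set Ev : Set Ω := {ω | ∃ T : ℕ, lam T ω < α ∧
      ∀ t < T, lam t ω < α * F ^ (β : ℝ) ∧ ω ∈ X t} with hEvdef
  have hsub : Ev ∩ G ⊆ ⋃ n, ruin n := by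
    rintro ω ⟨hEv, hG⟩
    obtain ⟨T, hT0, hpre⟩ := hEv
    have hpre' : ∀ t < T, lam t ω < α * F ^ (β : ℝ) ∧ ω ∈ C t := by
      intro t ht
      exact ⟨(hpre t ht).1, hG t (hpre t ht).2⟩
    obtain ⟨t, ht⟩ := coupling F s α β hF hs0 hs1 hα hβ lam S C hinit hsucc hfail
      ω T hT0 hpre'
    exact Set.mem_iUnion.mpr ⟨t, ht⟩
  have hEv_le : μ Ev ≤ μ (⋃ n, ruin n) := by
    calc μ Ev ≤ μ ((Ev ∩ G) ∪ Gᶜ) := by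
          refine measure_mono fun ω hω => ?_
          by_cases hG : ω ∈ G
          · exact Or.inl ⟨hω, hG⟩
          · exact Or.inr hG
      _ ≤ μ (Ev ∩ G) + μ Gᶜ := measure_union_le _ _
      _ = μ (Ev ∩ G) := by rw [hGc, add_zero]
      _ ≤ μ (⋃ n, ruin n) := measure_mono hsub
  refine hEv_le.trans ?_
  rw [Directed.measure_iUnion hruinmono.directed_le]
  refine iSup_le fun n => ?_
  rw [← ENNReal.ofReal_toReal (measure_ne_top μ (ruin n))]
  refine ENNReal.ofReal_le_ofReal ?_
  rw [← hphiβ]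
  exact hμruin n
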